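/- For the surface M_{k,a} with φ = z^k e^{az}, ψ = −e^{az}/z^k, dh = e^{−az}dz (k ≥ 2, 0 < a < π/2), the limit as R → ∞ of the contour integral 2i ∮_{|z|=R} φ_z/(φ − ψ̄) dz equals −4πk, and the limit as r → 0 of 2i ∮_{|z|=r} φ_z/(φ − ψ̄) dz equals 0, where φ_z/(φ − ψ̄) = (a + k/z)/(1 + e^{a(z̄−z)}/|z|^{2k}). -/

import Mathlib

open Complex Filter

section Aux

open Metric

private lemma aux_eps_norm (k : ℕ) (a R : ℝ) (hR : 0 < R) {z : ℂ} (hz : z ∈ sphere (0:ℂ) R) :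
    ‖Complex.exp ((a : ℂ) * ((starRingEnd ℂ) z - z)) / (((‖z‖ : ℝ) : ℂ) ^ (2 * k))‖
      = 1 / R ^ (2 * k) := by
  have habs : ‖z‖ = R := by
    simpa using mem_sphere_zero_iff_norm.mp hz
  have hre : ((a : ℂ) * ((starRingEnd ℂ) z - z)).re = 0 := by
    simp [Complex.mul_re, Complex.sub_re, Complex.sub_im]
  rw [norm_div, norm_pow, Complex.norm_exp, hre,
    Real.exp_zero, Complex.norm_real, norm_norm, habs]

private lemma aux_const_zero (c : ℂ) (R : ℝ) : (∮ z in C(0, R), c) = 0 := by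
  have h0 := circleIntegral.integral_sub_zpow_of_ne (n := 0) (by norm_num) 0 0 R
  have h3 := circleIntegral.integral_const_mul c (fun z => (z - 0) ^ (0 : ℤ)) 0 R
  simp only [zpow_zero, mul_one] at h3
  simp only [zpow_zero] at h0
  rw [h3, h0, mul_zero]

private lemma aux_div_sub (G E : ℂ) (h : 1 + E ≠ 0) :
    G / (1 + E) - G = -(G * E) / (1 + E) := by
  field_simp
  ring

private lemma aux_hz0 {R : ℝ} (hR : 0 < R) : ∀ z ∈ sphere (0:ℂ) R, z ≠ 0 := by
  intro z hz h
  rw [mem_sphere_zero_iff_norm, h] at hz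
  simp at hz; linarith [hz]

private lemma aux_g_int (k : ℕ) (a R : ℝ) (hR : 0 < R) :
    (∮ z in C(0, R), ((a : ℂ) + (k : ℂ) / z)) = 2 * Real.pi * I * k := by
  have h1 : ∀ z : ℂ, (a : ℂ) + (k : ℂ) / z = (k : ℂ) * z⁻¹ - (-(a : ℂ)) := by
    intro z; rw [div_eq_mul_inv]; ring
  simp only [h1]
  have hint1 : CircleIntegrable (fun z : ℂ => (k : ℂ) * z⁻¹) 0 R := by
    apply ContinuousOn.circleIntegrable hR.le
    exact continuousOn_const.mul (continuousOn_id.inv₀ (aux_hz0 hR))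
  rw [circleIntegral.integral_sub hint1 (circleIntegrable_const _ _ _),
    circleIntegral.integral_const_mul, aux_const_zero, sub_zero]
  have h2 := circleIntegral.integral_sub_center_inv (0:ℂ) (R := R) hR.ne'
  simp only [sub_zero] at h2
  rw [h2]; ring

end Aux

/-- For `M_{k,a}` with `φ = z^k e^{az}`, `ψ = -e^{az}/z^k` (`k ≥ 2`, `0 < a < π/2`),
where `φ_z/(φ - ψ̄) = (a + k/z)/(1 + e^{a(z̄-z)}/|z|^{2k})`, one has
`2i ∮_{|z|=R} φ_z/(φ-ψ̄) dz → -4πk` as `R → ∞` and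
`2i ∮_{|z|=r} φ_z/(φ-ψ̄) dz → 0` as `r → 0⁺`. -/
theorem stmt5 (k : ℕ) (hk : 2 ≤ k) (a : ℝ) (ha : 0 < a) (ha' : a < Real.pi / 2) :
    Tendsto (fun R : ℝ =>
        2 * I * ∮ z in C(0, R),
          ((a : ℂ) + (k : ℂ) / z) /
            (1 + Complex.exp ((a : ℂ) * ((starRingEnd ℂ) z - z)) /
              (((‖z‖ : ℝ) : ℂ) ^ (2 * k))))
      atTop (nhds (-(4 * Real.pi * k : ℝ) : ℂ)) ∧
    Tendsto (fun r : ℝ =>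
        2 * I * ∮ z in C(0, r),
          ((a : ℂ) + (k : ℂ) / z) /
            (1 + Complex.exp ((a : ℂ) * ((starRingEnd ℂ) z - z)) /
              (((‖z‖ : ℝ) : ℂ) ^ (2 * k))))
      (nhdsWithin 0 (Set.Ioi 0)) (nhds 0) := by
  set ε : ℂ → ℂ := fun z =>
    Complex.exp ((a : ℂ) * ((starRingEnd ℂ) z - z)) / (((‖z‖ : ℝ) : ℂ) ^ (2 * k)) with hε
  set g : ℂ → ℂ := fun z => (a : ℂ) + (k : ℂ) / z with hg
  set f : ℂ → ℂ := fun z => g z / (1 + ε z) with hf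
  have hπ := Real.pi_pos
  have hak : (0:ℝ) < a + k := by positivity
  have hcontε : ∀ R : ℝ, 0 < R → ContinuousOn ε (Metric.sphere (0:ℂ) R) := by
    intro R hR
    apply ContinuousOn.div
    · exact (Complex.continuous_exp.comp
        (continuous_const.mul (Complex.continuous_conj.sub continuous_id))).continuousOn
    · exact ((Complex.continuous_ofReal.comp continuous_norm).pow _).continuousOn
    · intro z hz
      apply pow_ne_zero
      rw [Complex.ofReal_ne_zero]
      intro h
      exact aux_hz0 hR z hz (norm_eq_zero.mp h)
  have hcontg : ∀ R : ℝ, 0 < R → ContinuousOn g (Metric.sphere (0:ℂ) R) := by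
    intro R hR
    exact continuousOn_const.add (continuousOn_const.div continuousOn_id (aux_hz0 hR))
  constructor
  · -- R → ∞
    rw [tendsto_iff_norm_sub_tendsto_zero]
    apply squeeze_zero' (Eventually.of_forall fun _ => norm_nonneg _)
      (g := fun R : ℝ => 8 * Real.pi * (a + k) / R)
    · filter_upwards [eventually_ge_atTop (2:ℝ)] with R hR2
      have hR0 : (0:ℝ) < R := by linarith
      have hR1 : (1:ℝ) ≤ R := by linarith
      have hpow0 : (0:ℝ) < R ^ (2 * k) := pow_pos hR0 _
      have hpow2 : (2:ℝ) ≤ R ^ (2 * k) := by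
        calc (2:ℝ) = 2 ^ 1 := (pow_one 2).symm
        _ ≤ 2 ^ (2 * k) := pow_le_pow_right₀ one_le_two (by omega)
        _ ≤ R ^ (2 * k) := by gcongr
      -- pointwise bound on |f - g|
      have hpt : ∀ z ∈ Metric.sphere (0:ℂ) R, ‖f z - g z‖ ≤ 2 * (a + k) / R ^ (2 * k) := by
        intro z hz
        have hznorm : ‖z‖ = R := mem_sphere_zero_iff_norm.mp hz
        have hz0 : z ≠ 0 := aux_hz0 hR0 z hz
        have hepsn : ‖ε z‖ = 1 / R ^ (2 * k) := aux_eps_norm k a R hR0 hz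
        have hDn : (1:ℝ) / 2 ≤ ‖1 + ε z‖ := by
          have h1 : ‖(1:ℂ)‖ - ‖-ε z‖ ≤ ‖1 - -ε z‖ := norm_sub_norm_le _ _
          simp only [norm_one, norm_neg, sub_neg_eq_add] at h1
          have : ‖ε z‖ ≤ 1 / 2 := by
            rw [hepsn]
            rw [div_le_div_iff₀ hpow0 (by norm_num)]
            linarith
          linarith
        have hDne : (1 + ε z) ≠ 0 := by
          intro h; rw [h, norm_zero] at hDn; linarith
        have hgn : ‖g z‖ ≤ a + k := by
          calc ‖g z‖ ≤ ‖(a:ℂ)‖ + ‖(k:ℂ) / z‖ := norm_add_le _ _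
          _ = a + k / R := by
            rw [norm_div, hznorm]
            simp [Complex.norm_real, Complex.norm_natCast, Real.norm_eq_abs, abs_of_pos ha]
          _ ≤ a + k := by
            have : (k:ℝ) / R ≤ k := div_le_self (by positivity) hR1
            linarith
        have hfg : f z - g z = -(g z * ε z) / (1 + ε z) :=
          aux_div_sub (g z) (ε z) hDne
        rw [hfg, norm_div, norm_neg, norm_mul, hepsn]
        calc ‖g z‖ * (1 / R ^ (2 * k)) / ‖1 + ε z‖
            ≤ (a + k) * (1 / R ^ (2 * k)) / (1 / 2) := by
              apply div_le_div₀ (by positivity) _ (by norm_num) hDn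
              exact mul_le_mul_of_nonneg_right hgn (by positivity)
        _ = 2 * (a + k) / R ^ (2 * k) := by field_simp
      have hfint : CircleIntegrable f 0 R := by
        apply ContinuousOn.circleIntegrable hR0.le
        apply (hcontg R hR0).div (continuousOn_const.add (hcontε R hR0))
        intro z hz
        have hepsn : ‖ε z‖ = 1 / R ^ (2 * k) := aux_eps_norm k a R hR0 hz
        intro h
        simp only [Pi.add_apply] at h
        rw [add_eq_zero_iff_eq_neg] at h
        have : ‖ε z‖ = 1 := by rw [← norm_neg, ← h, norm_one]
        rw [hepsn] at this
        have : R ^ (2 * k) = 1 := by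
          field_simp at this; linarith [this]
        linarith
      have hgint : CircleIntegrable g 0 R :=
        ContinuousOn.circleIntegrable hR0.le (hcontg R hR0)
      have hsplit : (∮ z in C(0, R), (f z - g z)) =
          (∮ z in C(0, R), f z) - ∮ z in C(0, R), g z :=
        circleIntegral.integral_sub hfint hgint
      have hnorm := circleIntegral.norm_integral_le_of_norm_le_const hR0.le hpt
      rw [hsplit, aux_g_int k a R hR0] at hnorm
      have heq : (2 * I * ∮ z in C(0, R), f z) - -((4 * Real.pi * k : ℝ) : ℂ)
          = 2 * I * ((∮ z in C(0, R), f z) - 2 * Real.pi * I * k) := by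
        push_cast
        linear_combination (4 * (Real.pi:ℂ) * k) * Complex.I_sq
      rw [heq]
      have hsq : R ^ 2 ≤ R ^ (2 * k) := pow_le_pow_right₀ hR1 (by omega)
      calc ‖2 * I * ((∮ z in C(0, R), f z) - 2 * Real.pi * I * k)‖
          = 2 * ‖(∮ z in C(0, R), f z) - 2 * Real.pi * I * k‖ := by
            rw [norm_mul, norm_mul, Complex.norm_I]; norm_num
      _ ≤ 2 * (2 * Real.pi * R * (2 * (a + k) / R ^ (2 * k))) := by linarith
      _ = 8 * Real.pi * (a + k) * R / R ^ (2 * k) := by ring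
      _ ≤ 8 * Real.pi * (a + k) / R := by
          rw [div_le_div_iff₀ hpow0 hR0]
          nlinarith [mul_le_mul_of_nonneg_left hsq
            (by positivity : (0:ℝ) ≤ 8 * Real.pi * (a + k))]
    · have : Tendsto (fun R : ℝ => (8 * Real.pi * (a + k)) * R⁻¹) atTop (nhds 0) := by
        simpa using tendsto_inv_atTop_zero.const_mul (8 * Real.pi * (a + k))
      simpa [div_eq_mul_inv] using this
  · -- r → 0⁺
    rw [tendsto_zero_iff_norm_tendsto_zero]
    apply squeeze_zero' (Eventually.of_forall fun _ => norm_nonneg _)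
      (g := fun r : ℝ => 8 * Real.pi * (a + k) * r)
    · filter_upwards [Ioo_mem_nhdsGT_of_mem (by norm_num : (0:ℝ) ∈ Set.Ico 0 (1/2))] with r hr
      obtain ⟨hr0, hr2⟩ := hr
      have hpow0 : (0:ℝ) < r ^ (2 * k) := pow_pos hr0 _
      have hrk : r ^ (2 * k) ≤ r := by
        calc r ^ (2 * k) ≤ r ^ 1 := pow_le_pow_of_le_one hr0.le (by linarith) (by omega)
        _ = r := pow_one r
      have hpt : ∀ z ∈ Metric.sphere (0:ℂ) r, ‖f z‖ ≤ (a + k) / r * (2 * r ^ (2 * k)) := by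
        intro z hz
        have hznorm : ‖z‖ = r := mem_sphere_zero_iff_norm.mp hz
        have hepsn : ‖ε z‖ = 1 / r ^ (2 * k) := aux_eps_norm k a r hr0 hz
        have h2rk : 2 * r ^ (2 * k) ≤ 1 := by linarith
        have hDn : 1 / (2 * r ^ (2 * k)) ≤ ‖1 + ε z‖ := by
          have h1 : ‖ε z‖ - ‖(-1 : ℂ)‖ ≤ ‖ε z - (-1)‖ := norm_sub_norm_le _ _
          have h2 : ε z - (-1) = 1 + ε z := by ring
          rw [h2, norm_neg, norm_one, hepsn] at h1
          have h3 : 1 / r ^ (2 * k) = 2 * (1 / (2 * r ^ (2 * k))) := by field_simp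
          have h4 : 1 ≤ 1 / (2 * r ^ (2 * k)) := by
            rw [le_div_iff₀ (by positivity)]; linarith
          linarith
        have hgn : ‖g z‖ ≤ (a + k) / r := by
          calc ‖g z‖ ≤ ‖(a:ℂ)‖ + ‖(k:ℂ) / z‖ := norm_add_le _ _
          _ = a + k / r := by
            rw [norm_div, hznorm]
            simp [Complex.norm_real, Complex.norm_natCast, Real.norm_eq_abs, abs_of_pos ha]
          _ ≤ (a + k) / r := by
            rw [add_div]
            have : a ≤ a / r := le_div_self ha.le hr0 (by linarith)
            linarith
        calc ‖f z‖ = ‖g z‖ / ‖1 + ε z‖ := norm_div _ _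
        _ ≤ ((a + k) / r) / (1 / (2 * r ^ (2 * k))) :=
            div_le_div₀ (by positivity) hgn (by positivity) hDn
        _ = (a + k) / r * (2 * r ^ (2 * k)) := by
            field_simp

      have hnorm := circleIntegral.norm_integral_le_of_norm_le_const hr0.le hpt
      calc ‖2 * I * ∮ z in C(0, r), f z‖ = 2 * ‖∮ z in C(0, r), f z‖ := by
            rw [norm_mul, norm_mul, Complex.norm_I]; norm_num
      _ ≤ 2 * (2 * Real.pi * r * ((a + k) / r * (2 * r ^ (2 * k)))) := by linarith
      _ = 8 * Real.pi * (a + k) * r ^ (2 * k) := by field_simp; ring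
      _ ≤ 8 * Real.pi * (a + k) * r := by
            exact mul_le_mul_of_nonneg_left hrk (by positivity)
    · have h : Tendsto (fun r : ℝ => 8 * Real.pi * (a + k) * r) (nhds 0) (nhds 0) := by
        exact (continuous_const.mul continuous_id).tendsto' (0:ℝ) 0 (by simp)
      exact h.mono_left nhdsWithin_le_nhds
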